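/- Let $(R,\mathfrak{m})$ be a two-dimensional regular local ring with regular system of parameters $x, y$, and let $0 < \alpha < n < 2\alpha$ be integers. Set $I = (x^3, x^2 y^{\alpha}, y^n)$ and $J = (x, y^{n-\alpha})$. Then $\mu_R(IJ) = 4$ and $\mu_R(\mathfrak{m}J) = 3$; explicitly $IJ = (x^4, x^3y^{n-\alpha}, xy^n, y^{2n-\alpha})$ and $\mathfrak{m}J = (x^2, xy, y^{n-\alpha+1})$, each being a minimal generating set. -/

import Mathlib

open Ideal IsLocalRing Submodule

namespace MuAux

variable {R : Type*} [CommRing R]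

section LocalBasic
variable [IsLocalRing R]

lemma isUnit_one_sub {e : R} (he : e ∈ maximalIdeal R) : IsUnit (1 - e) := by
  by_contra h
  have h1 : (1 : R) - e ∈ maximalIdeal R := h
  have : (1 : R) ∈ maximalIdeal R := by
    have := (maximalIdeal R).add_mem h1 he
    simpa using this
  exact (IsLocalRing.maximalIdeal.isMaximal R).ne_top ((Ideal.eq_top_iff_one _).mpr this)

lemma isUnit_sub {c e : R} (hc : c ∉ maximalIdeal R) (he : e ∈ maximalIdeal R) :
    IsUnit (c - e) := by
  by_contra h
  have h1 : c - e ∈ maximalIdeal R := h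
  exact hc (by simpa using (maximalIdeal R).add_mem h1 he)

/-- Krull intersection in the quotient, phrased upstairs. -/
lemma mem_of_forall_mem_sup_pow [IsNoetherianRing R] {I : Ideal R} (hI : I ≠ ⊤) {a : R}
    (h : ∀ j : ℕ, a ∈ I ⊔ maximalIdeal R ^ j) : a ∈ I := by
  have hnt : Nontrivial (R ⧸ I) := Ideal.Quotient.nontrivial_iff.mpr hI
  have hloc : IsLocalRing (R ⧸ I) :=
    IsLocalRing.of_surjective' (Ideal.Quotient.mk I) Ideal.Quotient.mk_surjective
  set f := Ideal.Quotient.mk I with hf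
  have hMbar : (maximalIdeal R).map f ≠ ⊤ := by
    intro htop
    have hcm := Ideal.comap_map_of_surjective f Ideal.Quotient.mk_surjective (maximalIdeal R)
    rw [htop] at hcm
    have hker : Ideal.comap f ⊥ = I := by
      rw [← RingHom.ker_eq_comap_bot]; exact Ideal.mk_ker
    have : (⊤ : Ideal R) = maximalIdeal R := by
      rw [Ideal.comap_top] at hcm
      rw [hcm, hker, sup_eq_left.mpr (le_maximalIdeal hI)]
    exact (IsLocalRing.maximalIdeal.isMaximal R).ne_top this.symm
  have key : f a ∈ ⨅ j : ℕ, ((maximalIdeal R).map f) ^ j := by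
    rw [Submodule.mem_iInf]
    intro j
    rcases Submodule.mem_sup.mp (h j) with ⟨u, hu, v, hv, huv⟩
    have hfa : f a = f v := by
      rw [← huv, map_add, Ideal.Quotient.eq_zero_iff_mem.mpr hu, zero_add]
    rw [hfa, ← Ideal.map_pow]
    exact Ideal.mem_map_of_mem f hv
  rw [Ideal.iInf_pow_eq_bot_of_isLocalRing _ hMbar, Submodule.mem_bot] at key
  exact Ideal.Quotient.eq_zero_iff_mem.mp key

end LocalBasic

lemma exists_chain (hdim : ringKrullDim R = 2) :
    ∃ P0 P1 P2 : Ideal R, P0.IsPrime ∧ P1.IsPrime ∧ P2.IsPrime ∧ P0 < P1 ∧ P1 < P2 := by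
  by_contra hc
  push_neg at hc
  have hlen : ∀ p : LTSeries (PrimeSpectrum R), p.length ≤ 1 := by
    intro p
    by_contra hp
    push_neg at hp
    have h2 : 2 ≤ p.length := hp
    have h01 : (⟨0, by omega⟩ : Fin (p.length + 1)) < ⟨1, by omega⟩ := by
      rw [Fin.mk_lt_mk]; omega
    have h12 : (⟨1, by omega⟩ : Fin (p.length + 1)) < ⟨2, by omega⟩ := by
      rw [Fin.mk_lt_mk]; omega
    have l0 := p.strictMono h01
    have l1 := p.strictMono h12
    exact hc (p ⟨0, by omega⟩).asIdeal (p ⟨1, by omega⟩).asIdeal (p ⟨2, by omega⟩).asIdeal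
      (p _).isPrime (p _).isPrime (p _).isPrime
      ((PrimeSpectrum.asIdeal_lt_asIdeal _ _).mpr l0)
      ((PrimeSpectrum.asIdeal_lt_asIdeal _ _).mpr l1)
  have hle : Order.krullDim (PrimeSpectrum R) ≤ 1 := by
    refine iSup_le fun p => ?_
    exact_mod_cast hlen p
  have h2 : Order.krullDim (PrimeSpectrum R) = 2 := hdim
  rw [h2] at hle
  norm_num at hle

variable [IsDomain R] [IsNoetherianRing R] [IsLocalRing R]

lemma dim_ne_two_of_principal {t : R} (hm : maximalIdeal R = Ideal.span {t})
    (hdim : ringKrullDim R = 2) : False := by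
  obtain ⟨P0, P1, P2, h0, h1, h2, l01, l12⟩ := exists_chain hdim
  have htm : t ∈ maximalIdeal R := hm ▸ Ideal.mem_span_singleton_self t
  have key : ∀ P : Ideal R, P.IsPrime → P ≠ maximalIdeal R → P = ⊥ := by
    intro P hP hPm
    have hPle : P ≤ maximalIdeal R := le_maximalIdeal hP.ne_top
    have htP : t ∉ P := by
      intro ht
      exact hPm (le_antisymm hPle
        (hm ▸ (Ideal.span_le.mpr (Set.singleton_subset_iff.mpr ht))))
    rw [eq_bot_iff]
    intro a ha
    have haj : ∀ j : ℕ, ∃ b ∈ P, a = t ^ j * b := by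
      intro j
      induction j with
      | zero => exact ⟨a, ha, by simp⟩
      | succ j ih =>
        obtain ⟨b, hb, rfl⟩ := ih
        have hbm : b ∈ maximalIdeal R := hPle hb
        rw [hm, Ideal.mem_span_singleton] at hbm
        obtain ⟨c, rfl⟩ := hbm
        have hc : c ∈ P := (hP.mem_or_mem hb).resolve_left htP
        exact ⟨c, hc, by ring⟩
    have hiInf : a ∈ ⨅ j : ℕ, maximalIdeal R ^ j := by
      rw [Submodule.mem_iInf]
      intro j
      obtain ⟨b, hb, rfl⟩ := haj j
      exact Ideal.mul_mem_right _ _ (Ideal.pow_mem_pow htm j)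
    rwa [Ideal.iInf_pow_eq_bot_of_isDomain _ (IsLocalRing.maximalIdeal.isMaximal R).ne_top,
      Submodule.mem_bot] at hiInf
  have hP1m : P1 ≠ maximalIdeal R := by
    intro h
    exact (lt_irrefl P1) (lt_of_lt_of_le l12 (h ▸ le_maximalIdeal h2.ne_top))
  have hP0m : P0 ≠ maximalIdeal R := by
    intro h
    exact (lt_irrefl P0) (lt_of_lt_of_le (lt_trans l01 l12) (h ▸ le_maximalIdeal h2.ne_top))
  have e1 := key P1 h1 hP1m
  have e0 := key P0 h0 hP0m
  rw [e0, e1] at l01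
  exact lt_irrefl _ l01


lemma span_singleton_ne_top' {y : R} (hy : y ∈ maximalIdeal R) :
    (Ideal.span {y} : Ideal R) ≠ ⊤ := by
  intro h
  have : Ideal.span {y} ≤ maximalIdeal R :=
    Ideal.span_le.mpr (Set.singleton_subset_iff.mpr hy)
  rw [h] at this
  exact (IsLocalRing.maximalIdeal.isMaximal R).ne_top (top_le_iff.mp this)

/-- Normal form for ideals containing `y` in a local ring with `m = (x, y)`. -/
lemma ideal_normal_form {x y : R} (hm : maximalIdeal R = Ideal.span {x, y})
    {D : Ideal R} (hyD : Ideal.span {y} ≤ D) :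
    D ≤ Ideal.span {y} ⊔ Ideal.span {x ^ sInf {j | x ^ j ∈ D}} := by
  have hxm : x ∈ maximalIdeal R := hm ▸ Ideal.subset_span (by simp)
  have hym : y ∈ maximalIdeal R := hm ▸ Ideal.subset_span (by simp)
  intro a ha
  by_cases hall : ∀ j : ℕ, a ∈ Ideal.span {y} ⊔ Ideal.span {x ^ j}
  · have hay : a ∈ Ideal.span {y} := by
      apply mem_of_forall_mem_sup_pow (span_singleton_ne_top' hym)
      intro j
      refine SetLike.le_def.mp (sup_le_sup_left ?_ _) (hall j)
      exact Ideal.span_le.mpr (Set.singleton_subset_iff.mpr (Ideal.pow_mem_pow hxm j))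
    exact Submodule.mem_sup_left hay
  · push_neg at hall
    set T : Set ℕ := {j | a ∉ Ideal.span {y} ⊔ Ideal.span {x ^ j}} with hT
    have hTne : T.Nonempty := hall
    set j0 := sInf T with hj0
    have hj0mem : a ∉ Ideal.span {y} ⊔ Ideal.span {x ^ j0} := Nat.sInf_mem hTne
    have hj0pos : j0 ≠ 0 := by
      intro h
      apply hj0mem
      rw [h, pow_zero, Ideal.span_singleton_one]
      exact Submodule.mem_sup_right Submodule.mem_top
    obtain ⟨jm, hjm⟩ : ∃ jm, j0 = jm + 1 := ⟨j0 - 1, by omega⟩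
    have hprev : a ∈ Ideal.span {y} ⊔ Ideal.span {x ^ jm} := by
      by_contra h
      have := Nat.sInf_le (show jm ∈ T from h)
      omega
    obtain ⟨u, hu, v, hv, huv⟩ := Submodule.mem_sup.mp hprev
    obtain ⟨d, hd⟩ := Ideal.mem_span_singleton'.mp hu
    obtain ⟨c, hc⟩ := Ideal.mem_span_singleton'.mp hv
    have hcm : c ∉ maximalIdeal R := by
      intro hcmem
      apply hj0mem
      rw [hm] at hcmem
      obtain ⟨e, f, hef⟩ := Ideal.mem_span_pair.mp hcmem
      have ha' : a = (d + f * x ^ jm) * y + e * (x ^ j0) := by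
        rw [hjm]
        rw [← huv, ← hd, ← hc, ← hef]; ring
      rw [ha']
      exact Submodule.add_mem _
        (Submodule.mem_sup_left (Ideal.mem_span_singleton'.mpr ⟨_, rfl⟩))
        (Submodule.mem_sup_right (Ideal.mem_span_singleton'.mpr ⟨_, rfl⟩))
    have hcu : IsUnit c := by
      by_contra h
      exact hcm ((IsLocalRing.mem_maximalIdeal c).mpr h)
    have hvD : v ∈ D := by
      have : v = a - u := by rw [← huv]; ring
      rw [this]
      exact Submodule.sub_mem _ ha (hyD hu)
    have hxjD : x ^ jm ∈ D := by
      obtain ⟨cu, hcu'⟩ := hcu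
      have : x ^ jm = ↑cu⁻¹ * v := by
        rw [← hc, ← hcu', ← mul_assoc, Units.inv_mul, one_mul]
      rw [this]
      exact Ideal.mul_mem_left _ _ hvD
    have hle : sInf {j | x ^ j ∈ D} ≤ jm := Nat.sInf_le hxjD
    have hdvd : x ^ sInf {j | x ^ j ∈ D} ∣ v := by
      rw [← hc]
      exact Dvd.dvd.mul_left (pow_dvd_pow x hle) c
    rw [← huv]
    exact Submodule.add_mem _ (Submodule.mem_sup_left hu)
      (Submodule.mem_sup_right (Ideal.mem_span_singleton.mpr hdvd))

/-- Mini principal ideal theorem: in our situation there is a prime containing `y`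
different from the maximal ideal. -/
lemma exists_prime_ne_max {x y : R} (hm : maximalIdeal R = Ideal.span {x, y})
    (hdim : ringKrullDim R = 2) :
    ∃ p : Ideal R, p.IsPrime ∧ y ∈ p ∧ p ≠ maximalIdeal R := by
  have hxm : x ∈ maximalIdeal R := hm ▸ Ideal.subset_span (by simp)
  have hym : y ∈ maximalIdeal R := hm ▸ Ideal.subset_span (by simp)
  by_contra hno
  push_neg at hno
  -- radical of (y) is the maximal ideal
  have hrad : (Ideal.span {y} : Ideal R).radical = maximalIdeal R := by
    rw [Ideal.radical_eq_sInf]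
    apply le_antisymm
    · exact sInf_le ⟨Ideal.span_le.mpr (Set.singleton_subset_iff.mpr hym),
        (IsLocalRing.maximalIdeal.isMaximal R).isPrime⟩
    · refine le_sInf fun p hp => ?_
      obtain ⟨hyp, hprime⟩ := hp
      rw [← hno p hprime (hyp (Ideal.mem_span_singleton_self y))]
  obtain ⟨k, hk⟩ := Ideal.exists_radical_pow_le_of_fg (Ideal.span {y} : Ideal R)
    (IsNoetherian.noetherian _)
  rw [hrad] at hk
  -- the chain
  obtain ⟨P0, P1, P2, h0, h1, h2, l01, l12⟩ := exists_chain hdim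
  have hP1m : P1 ≠ maximalIdeal R := by
    intro h
    exact (lt_irrefl P1) (lt_of_lt_of_le l12 (h ▸ le_maximalIdeal h2.ne_top))
  have hP1bot : P1 ≠ ⊥ := by
    intro h
    exact (not_le_of_gt l01) (h ▸ bot_le)
  have hyP1 : y ∉ P1 := fun h => hP1m (hno P1 h1 h)
  -- localization at P1
  set L := Localization.AtPrime P1 with hL
  set φ := algebraMap R L with hφ
  have hinj : Function.Injective φ :=
    IsLocalization.injective L (le_nonZeroDivisors_of_noZeroDivisors
      (S := P1.primeCompl) (fun h => h P1.zero_mem))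
  have hNoeL : IsNoetherianRing L :=
    IsLocalization.isNoetherianRing P1.primeCompl L inferInstance
  set S : ℕ → Ideal R := fun i => ((P1 ^ i).map φ).comap φ with hS
  have hSdesc : ∀ i, S (i + 1) ≤ S i := fun i =>
    Ideal.comap_mono (Ideal.map_mono (Ideal.pow_le_pow_right (by omega)))
  have hprimary : ∀ (i : ℕ) (c : R), c * y ∈ S i → c ∈ S i := by
    intro i c hc
    have hyu : IsUnit (φ y) :=
      (IsLocalization.AtPrime.isUnit_to_map_iff L P1 y).mpr hyP1
    obtain ⟨u, hu⟩ := hyu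
    have hceq : φ c = φ (c * y) * ↑u⁻¹ := by
      rw [_root_.map_mul, ← hu, mul_assoc, Units.mul_inv, mul_one]
    show φ c ∈ (P1 ^ i).map φ
    rw [hceq]
    exact Ideal.mul_mem_right _ _ hc
  set D : ℕ → Ideal R := fun i => S i ⊔ Ideal.span {y} with hD
  have hyD : ∀ i, Ideal.span {y} ≤ D i := fun i => le_sup_right
  have hkD : ∀ i, x ^ k ∈ D i := fun i =>
    (hyD i) (hk (Ideal.pow_mem_pow hxm k))
  have hDdesc : ∀ i, D (i + 1) ≤ D i := fun i => sup_le_sup_right (hSdesc i) _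
  set jj : ℕ → ℕ := fun i => sInf {j | x ^ j ∈ D i} with hjj
  have hjjmem : ∀ i, x ^ jj i ∈ D i := by
    intro i
    have : sInf {j | x ^ j ∈ D i} ∈ {j | x ^ j ∈ D i} :=
      Nat.sInf_mem ⟨k, hkD i⟩
    exact this
  have hjle : ∀ i, jj i ≤ k := fun i => Nat.sInf_le (hkD i)
  have hjmono : ∀ i, jj i ≤ jj (i + 1) := fun i =>
    Nat.sInf_le (hDdesc i (hjjmem (i + 1)))
  have hstab : ∃ i, jj i = jj (i + 1) := by
    by_contra h
    push_neg at h
    have grow : ∀ i, i ≤ jj i := by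
      intro i
      induction i with
      | zero => omega
      | succ i ih =>
        have h1' := hjmono i
        have h2' := h i
        omega
    have := grow (k + 1)
    have := hjle (k + 1)
    omega
  obtain ⟨i, hi⟩ := hstab
  have hDeq : D i = D (i + 1) := by
    apply le_antisymm _ (hDdesc i)
    calc D i ≤ Ideal.span {y} ⊔ Ideal.span {x ^ jj i} :=
          ideal_normal_form hm (hyD i)
      _ = Ideal.span {y} ⊔ Ideal.span {x ^ jj (i + 1)} := by rw [hi]
      _ ≤ D (i + 1) := sup_le (hyD (i + 1))
          (Ideal.span_le.mpr (Set.singleton_subset_iff.mpr (hjjmem (i + 1))))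
  have hstep : S i ≤ S (i + 1) ⊔ (Ideal.span {y} : Ideal R) • S i := by
    intro a ha
    have haD : a ∈ D (i + 1) := hDeq ▸ Submodule.mem_sup_left ha
    obtain ⟨b, hb, t, ht, hbt⟩ := Submodule.mem_sup.mp haD
    obtain ⟨c, hc⟩ := Ideal.mem_span_singleton'.mp ht
    have hcy : c * y ∈ S i := by
      have : c * y = a - b := by rw [hc, ← hbt]; ring
      rw [this]
      exact Submodule.sub_mem _ ha (hSdesc i hb)
    have hcS : c ∈ S i := hprimary i c hcy
    have hty : t ∈ (Ideal.span {y} : Ideal R) • S i := by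
      have h1' : y • c ∈ (Ideal.span {y} : Ideal R) • S i :=
        Submodule.smul_mem_smul (Ideal.mem_span_singleton_self y) hcS
      have h2' : y • c = t := by rw [smul_eq_mul, ← hc]; ring
      rwa [h2'] at h1'
    rw [← hbt]
    exact Submodule.add_mem _ (Submodule.mem_sup_left hb) (Submodule.mem_sup_right hty)
  have hSeq : S i ≤ S (i + 1) := by
    refine Submodule.le_of_le_smul_of_le_jacobson_bot (IsNoetherian.noetherian _) ?_ hstep
    rw [IsLocalRing.jacobson_eq_maximalIdeal (⊥ : Ideal R) bot_ne_top]
    exact Ideal.span_le.mpr (Set.singleton_subset_iff.mpr hym)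
  have hmapeq : (P1 ^ i).map φ = (P1 ^ (i + 1)).map φ := by
    have e1 : Ideal.map φ (Ideal.comap φ (Ideal.map φ (P1 ^ i))) = Ideal.map φ (P1 ^ i) :=
      IsLocalization.map_comap P1.primeCompl L _
    have e2 : Ideal.map φ (Ideal.comap φ (Ideal.map φ (P1 ^ (i + 1))))
        = Ideal.map φ (P1 ^ (i + 1)) :=
      IsLocalization.map_comap P1.primeCompl L _
    apply le_antisymm
    · calc (P1 ^ i).map φ = (S i).map φ := e1.symm
        _ ≤ (S (i + 1)).map φ := Ideal.map_mono hSeq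
        _ = (P1 ^ (i + 1)).map φ := e2
    · exact Ideal.map_mono (Ideal.pow_le_pow_right (by omega))
  have hTT : Ideal.map φ (P1 ^ i) ≤ maximalIdeal L • Ideal.map φ (P1 ^ i) := by
    have heq : Ideal.map φ (P1 ^ i) = maximalIdeal L * Ideal.map φ (P1 ^ i) := by
      conv_lhs => rw [hmapeq]
      rw [pow_succ, _root_.Ideal.map_mul,
        Localization.AtPrime.map_eq_maximalIdeal, mul_comm]
    rw [Ideal.smul_eq_mul]
    exact le_of_eq heq
  have hT : Ideal.map φ (P1 ^ i) = ⊥ :=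
    Submodule.eq_bot_of_le_smul_of_le_jacobson_bot (maximalIdeal L) _
      (IsNoetherian.noetherian _) hTT
      (le_of_eq (IsLocalRing.jacobson_eq_maximalIdeal (⊥ : Ideal L) bot_ne_top).symm)
  have hP1i : P1 ^ i = ⊥ := by
    rw [eq_bot_iff]
    intro a ha
    have hmem : φ a ∈ Ideal.map φ (P1 ^ i) := Ideal.mem_map_of_mem φ ha
    rw [hT, Submodule.mem_bot] at hmem
    have : a = 0 := hinj (by rw [hmem, map_zero])
    rw [Submodule.mem_bot]
    exact this
  have hP1b : P1 = ⊥ := by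
    rw [eq_bot_iff]
    intro a ha
    have hai : a ^ i ∈ P1 ^ i := Ideal.pow_mem_pow ha i
    rw [hP1i, Submodule.mem_bot] at hai
    rcases Nat.eq_zero_or_pos i with hi0 | hi0
    · rw [hi0, pow_zero] at hai
      exact absurd hai one_ne_zero
    · rw [Submodule.mem_bot]
      exact pow_eq_zero_iff (by omega) |>.mp hai
  exact hP1bot hP1b


lemma not_dvd_param {x y : R} (hm : maximalIdeal R = Ideal.span {x, y})
    (hdim : ringKrullDim R = 2) : ¬ x ∣ y := by
  intro hdvd
  have hyx : y ∈ Ideal.span {x} := Ideal.mem_span_singleton.mpr hdvd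
  apply dim_ne_two_of_principal (t := x) _ hdim
  rw [hm]
  apply le_antisymm
  · rw [Ideal.span_le]
    rintro z hz
    rcases hz with rfl | hz
    · exact Ideal.mem_span_singleton_self z
    · simp only [Set.mem_singleton_iff] at hz
      subst hz
      exact hyx
  · exact Ideal.span_mono (by simp)

lemma prime_param {x y : R} (hm : maximalIdeal R = Ideal.span {x, y})
    (hdim : ringKrullDim R = 2) : Prime y := by
  have hxm : x ∈ maximalIdeal R := hm ▸ Ideal.subset_span (by simp)
  have hym : y ∈ maximalIdeal R := hm ▸ Ideal.subset_span (by simp)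
  have hxy : ¬ x ∣ y := not_dvd_param hm hdim
  have hm' : maximalIdeal R = Ideal.span {y, x} := by rw [hm, Set.pair_comm]
  have hyx : ¬ y ∣ x := not_dvd_param hm' hdim
  have hyne : y ≠ 0 := by
    intro h
    exact hxy (h ▸ dvd_zero x)
  obtain ⟨p, hp, hyp, hpm⟩ := exists_prime_ne_max hm hdim
  have hxp : x ∉ p := by
    intro hx
    apply hpm
    apply le_antisymm (le_maximalIdeal hp.ne_top)
    rw [hm, Ideal.span_le]
    rintro z hz
    rcases hz with rfl | hz
    · exact hx
    · simp only [Set.mem_singleton_iff] at hz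
      subst hz
      exact hyp
  have hpy : p ≤ Ideal.span {y} := by
    intro a ha
    have hforms : ∀ j : ℕ, ∃ c ∈ p, ∃ d : R, a = x ^ j * c + d * y := by
      intro j
      induction j with
      | zero => exact ⟨a, ha, 0, by ring⟩
      | succ j ih =>
        obtain ⟨c, hc, d, rfl⟩ := ih
        have hcm : c ∈ maximalIdeal R := le_maximalIdeal hp.ne_top hc
        rw [hm] at hcm
        obtain ⟨u, v, huv⟩ := Ideal.mem_span_pair.mp hcm
        have hup : u ∈ p := by
          have hux : u * x ∈ p := by
            have : u * x = c - v * y := by rw [← huv]; ring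
            rw [this]
            exact Submodule.sub_mem _ hc (Ideal.mul_mem_left _ _ hyp)
          exact (hp.mem_or_mem hux).resolve_right hxp
        exact ⟨u, hup, v * x ^ j + d, by rw [← huv]; ring⟩
    apply mem_of_forall_mem_sup_pow (span_singleton_ne_top' hym)
    intro j
    obtain ⟨c, hc, d, rfl⟩ := hforms j
    refine Submodule.add_mem _ ?_ ?_
    · exact Submodule.mem_sup_right (Ideal.mul_mem_right _ _ (Ideal.pow_mem_pow hxm j))
    · exact Submodule.mem_sup_left (Ideal.mem_span_singleton'.mpr ⟨d, rfl⟩)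
  have hspan_eq : Ideal.span {y} = p :=
    le_antisymm (Ideal.span_le.mpr (Set.singleton_subset_iff.mpr hyp)) hpy
  rw [← Ideal.span_singleton_prime hyne, hspan_eq]
  exact hp

section Facts

variable {x y : R} (px : Prime x) (py : Prime y)
  (hxy : ¬ x ∣ y) (hyx : ¬ y ∣ x)
  (hxm : x ∈ maximalIdeal R) (hym : y ∈ maximalIdeal R)

include px hxy

lemma not_x_dvd_ypow {k : ℕ} : ¬ x ∣ y ^ k := fun h => hxy (px.dvd_of_dvd_pow h)

lemma not_x_dvd_unit {d : R} {t : ℕ} (ht : 1 ≤ t) (hym' : y ∈ maximalIdeal R) :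
    ¬ x ∣ (1 - d * y ^ t) := by
  intro h
  have hu : IsUnit (1 - d * y ^ t) :=
    isUnit_one_sub (Ideal.mul_mem_left _ d (Ideal.pow_mem_of_mem _ hym' t ht))
  exact px.not_unit (isUnit_of_dvd_unit h hu)

omit px hxy

lemma mem_span_triple {a b c z : R} :
    z ∈ Ideal.span {a, b, c} ↔ ∃ p q r : R, z = p * a + q * b + r * c := by
  constructor
  · intro h
    rw [show ({a, b, c} : Set R) = insert a {b, c} from rfl] at h
    obtain ⟨p, w, hw, hz⟩ := Submodule.mem_span_insert.mp h
    obtain ⟨q, r, hqr⟩ := Ideal.mem_span_pair.mp hw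
    exact ⟨p, q, r, by rw [hz, ← hqr, smul_eq_mul]; ring⟩
  · rintro ⟨p, q, r, rfl⟩
    refine Submodule.add_mem _ (Submodule.add_mem _ ?_ ?_) ?_ <;>
      exact Ideal.mul_mem_left _ _ (Ideal.subset_span (by simp))

include px py hxy hyx hym

-- facts for IJ = (x⁴, x³yᵝ, xy^{α+β}, y^{α+2β}),  1 ≤ β < α
lemma factA {α β : ℕ} (hβ : 1 ≤ β) :
    x ^ 4 ∉ Ideal.span {x ^ 3 * y ^ β, x * y ^ (α + β), y ^ (α + 2 * β)} := by
  intro h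
  obtain ⟨p, q, r, hE⟩ := mem_span_triple.mp h
  have hydvd : y ∣ x ^ 4 := by
    rw [hE]
    have h1 : y ∣ y ^ β := dvd_pow_self y (by omega)
    have h2 : y ∣ y ^ (α + β) := dvd_pow_self y (by omega)
    have h3 : y ∣ y ^ (α + 2 * β) := dvd_pow_self y (by omega)
    exact dvd_add (dvd_add ((h1.mul_left (x ^ 3)).mul_left p)
      ((h2.mul_left x).mul_left q)) (h3.mul_left r)
  exact hyx (py.dvd_of_dvd_pow hydvd)

lemma factB {α β : ℕ} (hβ : 1 ≤ β) (hβα : β < α) :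
    x ^ 3 * y ^ β ∉ Ideal.span {x ^ 4, x * y ^ (α + β), y ^ (α + 2 * β)} := by
  intro h
  obtain ⟨p, q, r, hE⟩ := mem_span_triple.mp h
  -- step 1
  have hs1 : x ∣ r * y ^ (α + 2 * β) :=
    ⟨x ^ 2 * y ^ β - p * x ^ 3 - q * y ^ (α + β), by linear_combination -hE⟩
  obtain ⟨r1, hr1⟩ : x ∣ r := ((px.dvd_mul.mp hs1).resolve_right (not_x_dvd_ypow px hxy))
  have hc1 : x ^ 2 * y ^ β = p * x ^ 3 + q * y ^ (α + β) + r1 * y ^ (α + 2 * β) := by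
    apply mul_left_cancel₀ px.ne_zero
    linear_combination hE + y ^ (α + 2 * β) * hr1
  -- step 2
  have hs2 : x ∣ (q + r1 * y ^ β) * y ^ (α + β) :=
    ⟨x * y ^ β - p * x ^ 2, by linear_combination -hc1⟩
  obtain ⟨d, hd⟩ : x ∣ q + r1 * y ^ β :=
    (px.dvd_mul.mp hs2).resolve_right (not_x_dvd_ypow px hxy)
  have hc2 : x * y ^ β = p * x ^ 2 + d * y ^ (α + β) := by
    apply mul_left_cancel₀ px.ne_zero
    linear_combination hc1 + y ^ (α + β) * hd
  -- step 3
  have hs3 : x ∣ d * y ^ (α + β) := ⟨y ^ β - p * x, by linear_combination -hc2⟩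
  obtain ⟨e, he⟩ : x ∣ d :=
    (px.dvd_mul.mp hs3).resolve_right (not_x_dvd_ypow px hxy)
  have hc3 : y ^ β = p * x + e * y ^ (α + β) := by
    apply mul_left_cancel₀ px.ne_zero
    linear_combination hc2 + y ^ (α + β) * he
  -- finish
  have hfin : x ∣ y ^ β * (1 - e * y ^ α) := ⟨p, by linear_combination hc3⟩
  rcases px.dvd_mul.mp hfin with h' | h'
  · exact not_x_dvd_ypow px hxy h'
  · exact not_x_dvd_unit px hxy (by omega) hym h'

lemma factC {α β : ℕ} (hβ : 1 ≤ β) (hβα : β < α) :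
    x * y ^ (α + β) ∉ Ideal.span {x ^ 4, x ^ 3 * y ^ β, y ^ (α + 2 * β)} := by
  intro h
  obtain ⟨p, q, r, hE⟩ := mem_span_triple.mp h
  have hs1 : x ∣ r * y ^ (α + 2 * β) :=
    ⟨y ^ (α + β) - p * x ^ 3 - q * x ^ 2 * y ^ β, by linear_combination -hE⟩
  obtain ⟨r1, hr1⟩ : x ∣ r :=
    (px.dvd_mul.mp hs1).resolve_right (not_x_dvd_ypow px hxy)
  have hc1 : y ^ (α + β) = p * x ^ 3 + q * x ^ 2 * y ^ β + r1 * y ^ (α + 2 * β) := by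
    apply mul_left_cancel₀ px.ne_zero
    linear_combination hE + y ^ (α + 2 * β) * hr1
  have hfin : x ∣ y ^ (α + β) * (1 - r1 * y ^ β) :=
    ⟨p * x ^ 2 + q * x * y ^ β, by linear_combination hc1⟩
  rcases px.dvd_mul.mp hfin with h' | h'
  · exact not_x_dvd_ypow px hxy h'
  · exact not_x_dvd_unit px hxy (by omega) hym h'

lemma factD {α β : ℕ} :
    y ^ (α + 2 * β) ∉ Ideal.span {x ^ 4, x ^ 3 * y ^ β, x * y ^ (α + β)} := by
  intro h
  obtain ⟨p, q, r, hE⟩ := mem_span_triple.mp h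
  have hxdvd : x ∣ y ^ (α + 2 * β) :=
    ⟨p * x ^ 3 + q * x ^ 2 * y ^ β + r * y ^ (α + β), by linear_combination hE⟩
  exact not_x_dvd_ypow px hxy hxdvd

-- facts for mJ = (x², xy, y^{β+1})
lemma factA' {β : ℕ} (hβ : 1 ≤ β) :
    x ^ 2 ∉ Ideal.span {x * y, y ^ (β + 1)} := by
  intro h
  obtain ⟨p, q, hE⟩ := Ideal.mem_span_pair.mp h
  have hydvd : y ∣ x ^ 2 :=
    ⟨p * x + q * y ^ β, by linear_combination -hE⟩
  exact hyx (py.dvd_of_dvd_pow hydvd)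

lemma factB' {β : ℕ} (hβ : 1 ≤ β) :
    x * y ∉ Ideal.span {x ^ 2, y ^ (β + 1)} := by
  intro h
  obtain ⟨p, q, hE⟩ := Ideal.mem_span_pair.mp h
  have hs1 : x ∣ q * y ^ (β + 1) := ⟨y - p * x, by linear_combination hE⟩
  obtain ⟨q1, hq1⟩ : x ∣ q :=
    (px.dvd_mul.mp hs1).resolve_right (not_x_dvd_ypow px hxy)
  have hc1 : y = p * x + q1 * y ^ (β + 1) := by
    apply mul_left_cancel₀ px.ne_zero
    linear_combination -hE + y ^ (β + 1) * hq1
  have hfin : x ∣ y * (1 - q1 * y ^ β) := ⟨p, by linear_combination hc1⟩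
  rcases px.dvd_mul.mp hfin with h' | h'
  · exact hxy h'
  · exact not_x_dvd_unit px hxy (by omega) hym h'

lemma factC' {β : ℕ} :
    y ^ (β + 1) ∉ Ideal.span {x ^ 2, x * y} := by
  intro h
  obtain ⟨p, q, hE⟩ := Ideal.mem_span_pair.mp h
  have hxdvd : x ∣ y ^ (β + 1) := ⟨p * x + q * y, by linear_combination -hE⟩
  exact not_x_dvd_ypow px hxy hxdvd

end Facts


end MuAux

/-- Minimal number of generators of an ideal. -/
noncomputable def mu {R : Type*} [CommRing R] (I : Ideal R) : ℕ :=
  sInf {n : ℕ | ∃ s : Finset R, s.card = n ∧ Ideal.span (s : Set R) = I}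

namespace MuAux

variable {R : Type*} [CommRing R]

lemma mu_eq_of_indep [IsLocalRing R] {K : Ideal R} {N : ℕ} (g : Fin N → R)
    (hspan : K = Ideal.span (Set.range g))
    (hind : ∀ c : Fin N → R, (∑ j, c j * g j) ∈ maximalIdeal R * K →
      ∀ j, c j ∈ maximalIdeal R) :
    mu K = N := by
  classical
  set SS := {n : ℕ | ∃ s : Finset R, s.card = n ∧ Ideal.span (s : Set R) = K} with hSS
  -- upper bound witness
  have hub : ∃ n ∈ SS, n ≤ N := by
    refine ⟨(Finset.image g Finset.univ).card, ⟨Finset.image g Finset.univ, rfl, ?_⟩, ?_⟩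
    · rw [Finset.coe_image, Finset.coe_univ, Set.image_univ, hspan]
    · exact (Finset.card_image_le).trans (by simp)
  -- lower bound: every generating finset has at least N elements
  have hlb : ∀ n ∈ SS, N ≤ n := by
    rintro n ⟨s, rfl, hs⟩
    classical
    -- coefficients of elements of s in terms of g
    have hCex : ∀ a : {z // z ∈ s}, ∃ cc : Fin N → R, ∑ j, cc j • g j = (a : R) := by
      intro a
      have : (a : R) ∈ K := by
        rw [← hs]
        exact Ideal.subset_span a.2
      rw [hspan] at this
      exact (mem_span_range_iff_exists_fun R).mp this
    choose C hC using hCex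
    -- coefficients of the g's in terms of s
    have hFex : ∀ p : Fin N, ∃ f : R → R, ∑ a ∈ s, f a • a = g p := by
      intro p
      have : g p ∈ Ideal.span (s : Set R) := by
        rw [hs, hspan]
        exact Ideal.subset_span ⟨p, rfl⟩
      exact (mem_span_finset.mp this).imp fun f hf => hf.2
    choose F hF using hFex
    set Mm : Fin N → Fin N → R := fun p q => ∑ a ∈ s.attach, F p ↑a * C a q with hMm
    have hM : ∀ p, ∑ q, Mm p q * g q = g p := by
      intro p
      have expand : g p = ∑ a ∈ s.attach, F p ↑a * ↑a := by
        rw [← hF p, ← Finset.sum_attach s (fun z => F p z • z)]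
        simp [smul_eq_mul]
      calc ∑ q, Mm p q * g q
          = ∑ q, ∑ a ∈ s.attach, (F p ↑a * C a q) * g q := by
            simp only [hMm, Finset.sum_mul]
        _ = ∑ a ∈ s.attach, ∑ q, (F p ↑a * C a q) * g q := Finset.sum_comm
        _ = ∑ a ∈ s.attach, F p ↑a * ↑a := by
            refine Finset.sum_congr rfl fun a _ => ?_
            rw [← hC a, Finset.mul_sum]
            refine Finset.sum_congr rfl fun q _ => ?_
            rw [smul_eq_mul]; ring
        _ = g p := expand.symm
    have hcoef : ∀ p q, Mm p q - (if p = q then 1 else 0) ∈ maximalIdeal R := by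
      intro p q
      refine hind (fun q => Mm p q - (if p = q then 1 else 0)) ?_ q
      have : ∑ j, (Mm p j - (if p = j then 1 else 0)) * g j = 0 := by
        simp only [sub_mul, Finset.sum_sub_distrib, hM p, ite_mul, one_mul, zero_mul]
        rw [Finset.sum_ite_eq]
        simp
      rw [this]
      exact Submodule.zero_mem _
    -- pass to the residue field
    set k := IsLocalRing.ResidueField R with hk
    set ρ := IsLocalRing.residue R with hρ
    set A : Matrix (Fin N) {z // z ∈ s} k := fun p a => ρ (F p ↑a) with hA
    set B : Matrix {z // z ∈ s} (Fin N) k := fun a q => ρ (C a q) with hB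
    have hAB : A * B = 1 := by
      ext p q
      rw [Matrix.mul_apply, Matrix.one_apply]
      have h1 : ∑ a : {z // z ∈ s}, A p a * B a q = ρ (Mm p q) := by
        rw [hMm, Finset.univ_eq_attach]
        rw [map_sum]
        exact Finset.sum_congr rfl fun a _ => (_root_.map_mul ρ _ _).symm
      have h2 : ρ (Mm p q - (if p = q then 1 else 0)) = 0 :=
        Ideal.Quotient.eq_zero_iff_mem.mpr (hcoef p q)
      rw [map_sub] at h2
      have h3 : ρ (Mm p q) = ρ (if p = q then 1 else 0) := by
        rwa [sub_eq_zero] at h2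
      rw [h1, h3]
      split <;> simp
    have hrank := Matrix.rank_mul_le_left A B
    rw [hAB, Matrix.rank_one] at hrank
    have h4 : Fintype.card (Fin N) ≤ Fintype.card {z // z ∈ s} :=
      le_trans hrank (Matrix.rank_le_card_width A)
    rwa [Fintype.card_fin, Fintype.card_coe] at h4
  obtain ⟨n0, hn0, hn0le⟩ := hub
  have hne : SS.Nonempty := ⟨n0, hn0⟩
  have h1 : mu K ≤ n0 := Nat.sInf_le hn0
  have h2 : N ≤ mu K := hlb _ (Nat.sInf_mem hne)
  omega

end MuAux

namespace MuAux

variable {R : Type*} [CommRing R]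

lemma mul_span_le_aux {mI K : Ideal R} {G : Set R} {g : R}
    (hK : K = Ideal.span (insert g G)) :
    mI * K ≤ Ideal.span G ⊔ mI • Ideal.span {g} := by
  rw [hK, show (Ideal.span (insert g G) : Ideal R) = Ideal.span {g} ⊔ Ideal.span G from
    Submodule.span_insert g G, Ideal.mul_sup]
  apply sup_le
  · rw [← Ideal.smul_eq_mul]
    exact le_sup_right
  · exact le_trans (Ideal.mul_le_right : mI * Ideal.span G ≤ Ideal.span G) le_sup_left

lemma unit_coeff_mem [IsLocalRing R] {G : Set R} {g c : R}
    (hc : c ∉ maximalIdeal R)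
    (h : c * g ∈ Ideal.span G ⊔ maximalIdeal R • Ideal.span {g}) :
    g ∈ Ideal.span G := by
  obtain ⟨w, hw, t, ht, hwt⟩ := Submodule.mem_sup.mp h
  obtain ⟨e, hem, het⟩ := Submodule.mem_smul_span_singleton.mp ht
  have het' : e * g = t := by rw [← het, smul_eq_mul]
  have hrel : (c - e) * g = w := by linear_combination -hwt - het'
  have hu : IsUnit (c - e) := isUnit_sub hc hem
  obtain ⟨u, hu'⟩ := hu
  have hgw : g = ↑u⁻¹ * w := by
    rw [← hrel, ← hu', ← mul_assoc, Units.inv_mul, one_mul]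
  rw [hgw]
  exact Ideal.mul_mem_left _ _ hw

lemma coord_mem_max [IsLocalRing R] {K : Ideal R} {G : Set R} {g z c : R}
    (hK : K = Ideal.span (insert g G))
    (hz : z ∈ maximalIdeal R * K)
    (hdecomp : ∃ w ∈ Ideal.span G, z = c * g + w)
    (hg : g ∉ Ideal.span G) : c ∈ maximalIdeal R := by
  by_contra hc
  apply hg
  obtain ⟨w, hw, hzeq⟩ := hdecomp
  have h2 := mul_span_le_aux hK hz
  have h1 : c * g ∈ Ideal.span G ⊔ maximalIdeal R • Ideal.span {g} := by
    have heq : c * g = z - w := by rw [hzeq]; ring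
    rw [heq]
    exact Submodule.sub_mem _ h2 (Submodule.mem_sup_left hw)
  exact unit_coeff_mem hc h1

end MuAux

set_option maxHeartbeats 2000000 in
open MuAux in
/-- For `0 < α < n < 2α`, `I = (x³, x²yᵅ, yⁿ)` and `J = (x, y^(n-α))`:
`μ(IJ) = 4` and `μ(𝔪J) = 3`, with explicit minimal generating sets
`IJ = (x⁴, x³y^(n-α), xyⁿ, y^(2n-α))` and `𝔪J = (x², xy, y^(n-α+1))`. -/
theorem mu_IJ_and_mJ {R : Type*} [CommRing R] [IsDomain R] [IsNoetherianRing R]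
    [IsLocalRing R] (x y : R) (hm : maximalIdeal R = Ideal.span {x, y})
    (hdim : ringKrullDim R = 2)
    (α n : ℕ) (hα : 0 < α) (hαn : α < n) (hn2α : n < 2 * α)
    (I J : Ideal R)
    (hI : I = Ideal.span {x ^ 3, x ^ 2 * y ^ α, y ^ n})
    (hJ : J = Ideal.span {x, y ^ (n - α)}) :
    mu (I * J) = 4 ∧ mu (maximalIdeal R * J) = 3 ∧
      I * J = Ideal.span {x ^ 4, x ^ 3 * y ^ (n - α), x * y ^ n, y ^ (2 * n - α)} ∧
      maximalIdeal R * J = Ideal.span {x ^ 2, x * y, y ^ (n - α + 1)} := by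
  classical
  obtain ⟨β, hβdef, hβ1, hβα⟩ : ∃ β, n = α + β ∧ 1 ≤ β ∧ β < α :=
    ⟨n - α, by omega, by omega, by omega⟩
  subst hβdef
  have e1 : α + β - α = β := by omega
  have e2 : 2 * (α + β) - α = α + 2 * β := by omega
  rw [e1] at hJ
  rw [e1, e2]
  -- primality of the parameters
  have hm' : maximalIdeal R = Ideal.span {y, x} := by rw [hm, Set.pair_comm]
  have py : Prime y := prime_param hm hdim
  have px : Prime x := prime_param hm' hdim
  have hxy : ¬ x ∣ y := not_dvd_param hm hdim
  have hyx : ¬ y ∣ x := not_dvd_param hm' hdim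
  have hxm : x ∈ maximalIdeal R := hm ▸ Ideal.subset_span (by simp)
  have hym : y ∈ maximalIdeal R := hm ▸ Ideal.subset_span (by simp)
  obtain ⟨δ, hδ, hδ1⟩ : ∃ δ, α = β + δ ∧ 1 ≤ δ := ⟨α - β, by omega, by omega⟩
  obtain ⟨γ, hγ⟩ : ∃ γ, β = γ + 1 := ⟨β - 1, by omega⟩
  -- the two ideal computations
  have eqIJ : I * J =
      Ideal.span {x ^ 4, x ^ 3 * y ^ β, x * y ^ (α + β), y ^ (α + 2 * β)} := by
    rw [hI, hJ, Ideal.span_mul_span']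
    apply le_antisymm
    · rw [Ideal.span_le]
      intro z hz
      rw [Set.mem_mul] at hz
      obtain ⟨a, ha, b, hb, rfl⟩ := hz
      simp only [Set.mem_insert_iff, Set.mem_singleton_iff] at ha hb
      rcases ha with ha | ha | ha <;> rcases hb with hb | hb <;> rw [ha, hb]
      · rw [show x ^ 3 * x = x ^ 4 by ring]
        exact Ideal.subset_span (by simp)
      · exact Ideal.subset_span (by simp)
      · rw [show x ^ 2 * y ^ α * x = y ^ δ * (x ^ 3 * y ^ β) by rw [hδ]; ring]
        exact Ideal.mul_mem_left _ _ (Ideal.subset_span (by simp))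
      · rw [show x ^ 2 * y ^ α * y ^ β = x * (x * y ^ (α + β)) by ring]
        exact Ideal.mul_mem_left _ _ (Ideal.subset_span (by simp))
      · rw [show y ^ (α + β) * x = x * y ^ (α + β) by ring]
        exact Ideal.subset_span (by simp)
      · rw [show y ^ (α + β) * y ^ β = y ^ (α + 2 * β) by ring]
        exact Ideal.subset_span (by simp)
    · rw [Ideal.span_le]
      intro z hz
      simp only [Set.mem_insert_iff, Set.mem_singleton_iff] at hz
      rcases hz with rfl | rfl | rfl | rfl
      · rw [show x ^ 4 = x ^ 3 * x by ring]
        exact Ideal.subset_span (Set.mul_mem_mul (by simp) (by simp))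
      · exact Ideal.subset_span (Set.mul_mem_mul (by simp) (by simp))
      · rw [show x * y ^ (α + β) = y ^ (α + β) * x by ring]
        exact Ideal.subset_span (Set.mul_mem_mul (by simp) (by simp))
      · rw [show y ^ (α + 2 * β) = y ^ (α + β) * y ^ β by ring]
        exact Ideal.subset_span (Set.mul_mem_mul (by simp) (by simp))
  have eqmJ : maximalIdeal R * J = Ideal.span {x ^ 2, x * y, y ^ (β + 1)} := by
    rw [hm, hJ, Ideal.span_mul_span']
    apply le_antisymm
    · rw [Ideal.span_le]
      intro z hz
      rw [Set.mem_mul] at hz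
      obtain ⟨a, ha, b, hb, rfl⟩ := hz
      simp only [Set.mem_insert_iff, Set.mem_singleton_iff] at ha hb
      rcases ha with ha | ha <;> rcases hb with hb | hb <;> rw [ha, hb]
      · rw [show x * x = x ^ 2 by ring]
        exact Ideal.subset_span (by simp)
      · rw [show x * y ^ β = y ^ γ * (x * y) by rw [hγ]; ring]
        exact Ideal.mul_mem_left _ _ (Ideal.subset_span (by simp))
      · rw [show y * x = x * y by ring]
        exact Ideal.subset_span (by simp)
      · rw [show y * y ^ β = y ^ (β + 1) by ring]
        exact Ideal.subset_span (by simp)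
    · rw [Ideal.span_le]
      intro z hz
      simp only [Set.mem_insert_iff, Set.mem_singleton_iff] at hz
      rcases hz with rfl | rfl | rfl
      · rw [show x ^ 2 = x * x by ring]
        exact Ideal.subset_span (Set.mul_mem_mul (by simp) (by simp))
      · rw [show x * y = y * x by ring]
        exact Ideal.subset_span (Set.mul_mem_mul (by simp) (by simp))
      · rw [show y ^ (β + 1) = y * y ^ β by ring]
        exact Ideal.subset_span (Set.mul_mem_mul (by simp) (by simp))
  -- generators as functions
  set g4 : Fin 4 → R := ![x ^ 4, x ^ 3 * y ^ β, x * y ^ (α + β), y ^ (α + 2 * β)] with hg4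
  set g3 : Fin 3 → R := ![x ^ 2, x * y, y ^ (β + 1)] with hg3
  have hrange4 : Set.range g4 =
      {x ^ 4, x ^ 3 * y ^ β, x * y ^ (α + β), y ^ (α + 2 * β)} := by
    ext z
    constructor
    · rintro ⟨i, rfl⟩
      fin_cases i <;> simp [hg4]
    · intro hz
      simp only [Set.mem_insert_iff, Set.mem_singleton_iff] at hz
      rcases hz with rfl | rfl | rfl | rfl
      · exact ⟨0, by simp [hg4]⟩
      · exact ⟨1, by simp [hg4]⟩
      · exact ⟨2, by simp [hg4]⟩
      · exact ⟨3, by simp [hg4]⟩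
  have hrange3 : Set.range g3 = {x ^ 2, x * y, y ^ (β + 1)} := by
    ext z
    constructor
    · rintro ⟨i, rfl⟩
      fin_cases i <;> simp [hg3]
    · intro hz
      simp only [Set.mem_insert_iff, Set.mem_singleton_iff] at hz
      rcases hz with rfl | rfl | rfl
      · exact ⟨0, by simp [hg3]⟩
      · exact ⟨1, by simp [hg3]⟩
      · exact ⟨2, by simp [hg3]⟩
  -- independence for IJ
  have hind4 : ∀ c : Fin 4 → R, (∑ j, c j * g4 j) ∈ maximalIdeal R * (I * J) →
      ∀ j, c j ∈ maximalIdeal R := by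
    intro c hc
    have hsum : c 0 * (x ^ 4) + c 1 * (x ^ 3 * y ^ β) + c 2 * (x * y ^ (α + β))
        + c 3 * (y ^ (α + 2 * β)) ∈ maximalIdeal R * (I * J) := by
      have hs : ∑ j, c j * g4 j = c 0 * (x ^ 4) + c 1 * (x ^ 3 * y ^ β)
          + c 2 * (x * y ^ (α + β)) + c 3 * (y ^ (α + 2 * β)) := by
        rw [Fin.sum_univ_four]
        simp [hg4]
      rwa [hs] at hc
    intro j
    fin_cases j
    · show c 0 ∈ maximalIdeal R
      refine coord_mem_max (G := {x ^ 3 * y ^ β, x * y ^ (α + β), y ^ (α + 2 * β)})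
        (by rw [eqIJ]) hsum
        ⟨c 1 * (x ^ 3 * y ^ β) + c 2 * (x * y ^ (α + β)) + c 3 * (y ^ (α + 2 * β)), ?_, by ring⟩
        (factA px py hxy hyx hym hβ1)
      refine Submodule.add_mem _ (Submodule.add_mem _ ?_ ?_) ?_ <;>
        exact Ideal.mul_mem_left _ _ (Ideal.subset_span (by simp))
    · show c 1 ∈ maximalIdeal R
      refine coord_mem_max (G := {x ^ 4, x * y ^ (α + β), y ^ (α + 2 * β)})
        (by rw [eqIJ]; congr 1; ext z; simp only [Set.mem_insert_iff, Set.mem_singleton_iff]; tauto)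
        hsum
        ⟨c 0 * (x ^ 4) + c 2 * (x * y ^ (α + β)) + c 3 * (y ^ (α + 2 * β)), ?_, by ring⟩
        (factB px py hxy hyx hym hβ1 hβα)
      refine Submodule.add_mem _ (Submodule.add_mem _ ?_ ?_) ?_ <;>
        exact Ideal.mul_mem_left _ _ (Ideal.subset_span (by simp))
    · show c 2 ∈ maximalIdeal R
      refine coord_mem_max (G := {x ^ 4, x ^ 3 * y ^ β, y ^ (α + 2 * β)})
        (by rw [eqIJ]; congr 1; ext z; simp only [Set.mem_insert_iff, Set.mem_singleton_iff]; tauto)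
        hsum
        ⟨c 0 * (x ^ 4) + c 1 * (x ^ 3 * y ^ β) + c 3 * (y ^ (α + 2 * β)), ?_, by ring⟩
        (factC px py hxy hyx hym hβ1 hβα)
      refine Submodule.add_mem _ (Submodule.add_mem _ ?_ ?_) ?_ <;>
        exact Ideal.mul_mem_left _ _ (Ideal.subset_span (by simp))
    · show c 3 ∈ maximalIdeal R
      refine coord_mem_max (G := {x ^ 4, x ^ 3 * y ^ β, x * y ^ (α + β)})
        (by rw [eqIJ]; congr 1; ext z; simp only [Set.mem_insert_iff, Set.mem_singleton_iff]; tauto)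
        hsum
        ⟨c 0 * (x ^ 4) + c 1 * (x ^ 3 * y ^ β) + c 2 * (x * y ^ (α + β)), ?_, by ring⟩
        (factD px py hxy hyx hym)
      refine Submodule.add_mem _ (Submodule.add_mem _ ?_ ?_) ?_ <;>
        exact Ideal.mul_mem_left _ _ (Ideal.subset_span (by simp))
  -- independence for mJ
  have hind3 : ∀ c : Fin 3 → R, (∑ j, c j * g3 j) ∈ maximalIdeal R * (maximalIdeal R * J) →
      ∀ j, c j ∈ maximalIdeal R := by
    intro c hc
    have hsum : c 0 * (x ^ 2) + c 1 * (x * y) + c 2 * (y ^ (β + 1))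
        ∈ maximalIdeal R * (maximalIdeal R * J) := by
      have hs : ∑ j, c j * g3 j = c 0 * (x ^ 2) + c 1 * (x * y) + c 2 * (y ^ (β + 1)) := by
        rw [Fin.sum_univ_three]
        simp [hg3]
      rwa [hs] at hc
    intro j
    fin_cases j
    · show c 0 ∈ maximalIdeal R
      refine coord_mem_max (G := {x * y, y ^ (β + 1)})
        (by rw [eqmJ]) hsum
        ⟨c 1 * (x * y) + c 2 * (y ^ (β + 1)), ?_, by ring⟩
        (factA' px py hxy hyx hym hβ1)
      refine Submodule.add_mem _ ?_ ?_ <;>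
        exact Ideal.mul_mem_left _ _ (Ideal.subset_span (by simp))
    · show c 1 ∈ maximalIdeal R
      refine coord_mem_max (G := {x ^ 2, y ^ (β + 1)})
        (by rw [eqmJ]; congr 1; ext z; simp only [Set.mem_insert_iff, Set.mem_singleton_iff]; tauto)
        hsum
        ⟨c 0 * (x ^ 2) + c 2 * (y ^ (β + 1)), ?_, by ring⟩
        (factB' px py hxy hyx hym hβ1)
      refine Submodule.add_mem _ ?_ ?_ <;>
        exact Ideal.mul_mem_left _ _ (Ideal.subset_span (by simp))
    · show c 2 ∈ maximalIdeal R
      refine coord_mem_max (G := {x ^ 2, x * y})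
        (by rw [eqmJ]; congr 1; ext z; simp only [Set.mem_insert_iff, Set.mem_singleton_iff]; tauto)
        hsum
        ⟨c 0 * (x ^ 2) + c 1 * (x * y), ?_, by ring⟩
        (factC' px py hxy hyx hym)
      refine Submodule.add_mem _ ?_ ?_ <;>
        exact Ideal.mul_mem_left _ _ (Ideal.subset_span (by simp))
  refine ⟨?_, ?_, eqIJ, eqmJ⟩
  · exact mu_eq_of_indep g4 (by rw [hrange4]; exact eqIJ) hind4
  · exact mu_eq_of_indep g3 (by rw [hrange3]; exact eqmJ) hind3
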